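/- Let (p,p') be a pair of coprime positive integers with p ≥ 2 and p' ≥ 2, set a = p'/p, fix (r,s) ∈ K_{p,p'} and ε,ε' ∈ {0,1}, and set S_{r,s} = { λ_{r,s}, λ_{p−r,p'−s} } + ℤ. Then the family of functions ℍ×ℂ×ℂ → ℂ given by { (τ,u,t) ↦ T^{ε,ε'}_{r,s;x}(τ,u,t) : x ∈ ℝ + i(ℝ∖S_{r,s}) } is linearly independent over ℂ: every finite ℂ-linear combination of functions in this family with distinct indices x that vanishes identically has all coefficients zero. -/

import Mathlib

open Complex MeasureTheory
open scoped Real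

noncomputable section

/-- `e2 x = exp(2πi x)`. -/
def e2 (x : ℂ) : ℂ := Complex.exp (2 * (π : ℂ) * Complex.I * x)

/-- Dedekind dedekindEta function. -/
def dedekindEta (τ : ℂ) : ℂ := e2 (τ / 24) * ∏' n : ℕ, (1 - e2 (τ * (n + 1)))

/-- Jacobi theta with characteristics ε, ε' ∈ {0,1}. -/
def theta (ε ε' : ℕ) (u τ : ℂ) : ℂ :=
  e2 (u * ε / 2) * e2 (τ * ε / 8) *
    ∏' n : ℕ,
      ((1 - e2 (τ * (n + 1))) *
        (1 + (-1 : ℂ) ^ ε' * e2 u * e2 (τ * ((n + 1 : ℂ) - (1 - (ε : ℂ)) / 2))) *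
        (1 + (-1 : ℂ) ^ ε' * e2 (-u) * e2 (τ * ((n + 1 : ℂ) - (1 + (ε : ℂ)) / 2))))

/-- Normalized BPZ minimal-series character. -/
def chiBPZ (p p' r s : ℤ) (τ : ℂ) : ℂ :=
  (dedekindEta τ)⁻¹ * ∑' n : ℤ,
    (e2 (τ * ((p * p' : ℂ) * ((n : ℂ) + ((r * p' - s * p : ℤ) : ℂ) / (2 * p * p')) ^ 2)) -
     e2 (τ * ((p * p' : ℂ) * ((n : ℂ) + ((-r * p' - s * p : ℤ) : ℂ) / (2 * p * p')) ^ 2)))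

/-- The typical character function T^{ε,ε'}_{r,s;x}(τ,u,t). -/
def Tchar (p p' : ℤ) (ε ε' : ℕ) (r s : ℤ) (x : ℂ) (τ u t : ℂ) : ℂ :=
  (-1 : ℂ) ^ (ε * ε') *
    e2 (τ * (((p' : ℂ) / p) * (x - Complex.I * ε / 2) ^ 2)) *
    e2 (u * (2 * Complex.I * ((p' : ℂ) / p) * (x - Complex.I * ε / 2))) *
    e2 (t * (3 * (1 - 2 * ((p' : ℂ) / p)))) *
    theta ε ε' u τ / (dedekindEta τ) ^ 2 * chiBPZ p p' r s τ

/-- The index set K_{p,p'}. -/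
def Kset (p p' : ℤ) : Finset (ℤ × ℤ) :=
  (Finset.Icc 1 (p - 1) ×ˢ Finset.Icc 1 (p' - 1)).filter
    (fun rs => rs.1 * p' + rs.2 * p ≤ p * p')

/-- BPZ modular S-matrix. -/
def SBPZ (p p' r s r' s' : ℤ) : ℂ :=
  (Real.sqrt (8 / ((p : ℝ) * p')) : ℂ) * (-1 : ℂ) ^ ((r + s) * (r' + s')) *
    (Real.sin (π * ((p : ℝ) - p') * r * r' / p) : ℂ) *
    (Real.sin (π * ((p : ℝ) - p') * s * s' / p') : ℂ)

/-- Typical-typical modular S-data. -/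
def Stt (p p' : ℤ) (ε ε' : ℕ) (r s : ℤ) (x : ℂ) (r' s' : ℤ) (x' : ℂ) : ℂ :=
  Complex.I ^ (-((ε : ℤ) * ε')) * SBPZ p p' r s r' s' *
    (Real.sqrt (2 * ((p' : ℝ) / p)) : ℂ) *
    Complex.exp (-4 * (π : ℂ) * Complex.I * ((p' : ℂ) / p) *
      (x - Complex.I * ε / 2) * (x' - Complex.I * ε' / 2))


/-- λ_{r,s} = (r−1)/2 − sp/(2p'). -/
def lam (p p' r s : ℤ) : ℝ := ((r : ℝ) - 1) / 2 - (s : ℝ) * p / (2 * p')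

/-- S_{r,s} = {λ_{r,s}, λ_{p−r,p'−s}} + ℤ, as a subset of ℝ. -/
def SrsSet (p p' r s : ℤ) : Set ℝ :=
  {y | ∃ n : ℤ, y = lam p p' r s + n ∨ y = lam p p' (p - r) (p' - s) + n}

lemma e2_ne_zero (z : ℂ) : e2 z ≠ 0 := Complex.exp_ne_zero _

lemma e2_add (z w : ℂ) : e2 (z + w) = e2 z * e2 w := by
  rw [e2, e2, e2, ← Complex.exp_add]; ring_nf

lemma e2_zero : e2 0 = 1 := by simp [e2]

lemma norm_e2 (z : ℂ) : ‖e2 z‖ = Real.exp (-(2*π*z.im)) := by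
  rw [e2, Complex.norm_exp]
  congr 1
  simp [Complex.mul_re, Complex.mul_im]

lemma e2_I_mul (c : ℝ) : e2 (Complex.I * c) = ((Real.exp (-(2*π*c)) : ℝ) : ℂ) := by
  rw [e2, Complex.ofReal_exp]
  congr 1
  push_cast
  linear_combination (2*(π:ℂ)*c) * Complex.I_sq

lemma aux_one_sub_ne {w : ℂ} (h : ‖w‖ < 1) : 1 - w ≠ 0 := by
  intro hc
  have : w = 1 := by linear_combination -hc
  rw [this] at h; simp at h

lemma aux_one_add_ne {w : ℂ} (h : ‖w‖ < 1) : 1 + w ≠ 0 := by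
  intro hc
  have : w = -1 := by linear_combination hc
  rw [this] at h; simp at h

lemma tprod_ne_zero_of (F : ℕ → ℂ) (h0 : ∀ n, F n ≠ 0)
    (hs : Summable fun n => ‖F n - 1‖) : (∏' n, F n) ≠ 0 := by
  have hlog : Summable fun n => Complex.log (F n) := by
    have ht : Filter.Tendsto (fun n => ‖F n - 1‖) Filter.atTop (nhds 0) :=
      hs.tendsto_atTop_zero
    have hev : ∀ᶠ n in Filter.cofinite, ‖Complex.log (F n)‖ ≤ (3/2) * ‖F n - 1‖ := by
      rw [Nat.cofinite_eq_atTop]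
      filter_upwards [ht.eventually_le_const (by norm_num : (0:ℝ) < 1/2)] with n hn
      have := Complex.norm_log_one_add_half_le_self (z := F n - 1) hn
      simpa using this
    exact Summable.of_norm_bounded_eventually (hs.mul_left (3/2)) hev
  have h2 := Complex.cexp_tsum_eq_tprod h0 hlog
  rw [← h2]
  exact Complex.exp_ne_zero _

lemma norm_e2_I (w : ℂ) : ‖e2 (Complex.I * w)‖ = Real.exp (-(2*π*w.re)) := by
  rw [norm_e2]; congr 2; simp

lemma exp2pi_lt_one {c : ℝ} (hc : 0 < c) : Real.exp (-(2*π*c)) < 1 := by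
  rw [Real.exp_lt_one_iff]; nlinarith [Real.pi_pos]

lemma summable_exp_seq (c : ℕ → ℝ) (h : ∀ n : ℕ, (n:ℝ) ≤ c n) :
    Summable (fun n => Real.exp (-(2*π*c n))) := by
  have hlt : Real.exp (-(2*π)) < 1 := by
    rw [Real.exp_lt_one_iff]; nlinarith [Real.pi_pos]
  refine Summable.of_nonneg_of_le (fun n => (Real.exp_pos _).le) (fun n => ?_)
    (summable_geometric_of_lt_one (Real.exp_nonneg _) hlt)
  rw [← Real.exp_nat_mul]
  apply Real.exp_le_exp.2
  have h2 := h n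
  nlinarith [Real.pi_pos]

lemma eta_I_ne : dedekindEta Complex.I ≠ 0 := by
  rw [dedekindEta]
  apply mul_ne_zero (e2_ne_zero _)
  apply tprod_ne_zero_of
  · intro n
    apply aux_one_sub_ne
    rw [norm_e2_I]
    apply exp2pi_lt_one
    have h1 : (((n:ℂ)+1)).re = (n:ℝ)+1 := by simp
    rw [h1]; positivity
  · have : ∀ n : ℕ, ‖1 - e2 (Complex.I * ((n:ℂ) + 1)) - 1‖ = Real.exp (-(2*π*((n:ℝ)+1))) := by
      intro n
      rw [show (1 : ℂ) - e2 (Complex.I * ((n:ℂ)+1)) - 1 = -e2 (Complex.I * ((n:ℂ)+1)) by ring,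
        norm_neg, norm_e2_I]
      norm_num
    simp only [this]
    exact summable_exp_seq _ (fun n => by linarith)

lemma theta_I_ne (ε ε' : ℕ) (hε : ε ≤ 1) (hε' : ε' ≤ 1) (u : ℝ) (hu : Irrational u) :
    theta ε ε' (u : ℂ) Complex.I ≠ 0 := by
  have hεr0 : (0:ℝ) ≤ (ε:ℝ) := Nat.cast_nonneg ε
  have hεr1 : (ε:ℝ) ≤ 1 := by exact_mod_cast hε
  rw [theta]
  apply mul_ne_zero (mul_ne_zero (e2_ne_zero _) (e2_ne_zero _))
  set A : ℕ → ℂ := fun n => 1 - e2 (Complex.I * ((n:ℂ) + 1)) with hA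
  set B : ℕ → ℂ := fun n =>
    1 + (-1:ℂ)^ε' * e2 (u:ℂ) * e2 (Complex.I * (((n:ℂ) + 1) - (1 - (ε:ℂ))/2)) with hB
  set C : ℕ → ℂ := fun n =>
    1 + (-1:ℂ)^ε' * e2 (-(u:ℂ)) * e2 (Complex.I * (((n:ℂ) + 1) - (1 + (ε:ℂ))/2)) with hC
  have hnormu : ‖e2 (u:ℂ)‖ = 1 := by rw [norm_e2]; simp
  have hnormu' : ‖e2 (-(u:ℂ))‖ = 1 := by rw [norm_e2]; simp
  have hsign : ‖(-1:ℂ)^ε'‖ = 1 := by simp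
  have hAn : ∀ n : ℕ, ‖A n - 1‖ = Real.exp (-(2*π*((n:ℝ)+1))) := by
    intro n
    rw [hA]
    simp only []
    rw [show (1 : ℂ) - e2 (Complex.I * ((n:ℂ)+1)) - 1 = -e2 (Complex.I * ((n:ℂ)+1)) by ring,
      norm_neg, norm_e2_I]
    norm_num
  have hBn : ∀ n : ℕ, ‖B n - 1‖ = Real.exp (-(2*π*((n:ℝ)+1-(1-(ε:ℝ))/2))) := by
    intro n
    rw [hB]
    simp only []
    rw [add_sub_cancel_left, norm_mul, norm_mul, hsign, hnormu, one_mul, one_mul, norm_e2_I]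
    congr 2
    simp
  have hCn : ∀ n : ℕ, ‖C n - 1‖ = Real.exp (-(2*π*((n:ℝ)+1-(1+(ε:ℝ))/2))) := by
    intro n
    rw [hC]
    simp only []
    rw [add_sub_cancel_left, norm_mul, norm_mul, hsign, hnormu', one_mul, one_mul, norm_e2_I]
    congr 2
    simp
  have hA0 : ∀ n : ℕ, A n ≠ 0 := by
    intro n
    rw [hA]
    apply aux_one_sub_ne
    rw [norm_e2_I]
    apply exp2pi_lt_one
    have h1 : (((n:ℂ)+1)).re = (n:ℝ)+1 := by simp
    rw [h1]; positivity
  have hB0 : ∀ n : ℕ, B n ≠ 0 := by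
    intro n
    rw [hB]
    apply aux_one_add_ne
    rw [norm_mul, norm_mul, hsign, hnormu, one_mul, one_mul, norm_e2_I]
    have h1 : ((((n:ℂ)+1) - (1 - (ε:ℂ))/2)).re = (n:ℝ)+1-(1-(ε:ℝ))/2 := by simp
    rw [h1]
    apply exp2pi_lt_one
    nlinarith [Nat.cast_nonneg (α := ℝ) n]
  have hC0 : ∀ n : ℕ, C n ≠ 0 := by
    intro n
    rw [hC]
    by_cases hpos : 0 < (n:ℝ)+1-(1+(ε:ℝ))/2
    · apply aux_one_add_ne
      rw [norm_mul, norm_mul, hsign, hnormu', one_mul, one_mul, norm_e2_I]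
      have h1 : ((((n:ℂ)+1) - (1 + (ε:ℂ))/2)).re = (n:ℝ)+1-(1+(ε:ℝ))/2 := by simp
      rw [h1]
      exact exp2pi_lt_one hpos
    · -- degenerate: n = 0, ε = 1
      push_neg at hpos
      have hn0 : n = 0 := by
        have : (n:ℝ) < 1 := by nlinarith
        exact_mod_cast Nat.lt_one_iff.mp (by exact_mod_cast this)
      have hε1 : ε = 1 := by
        interval_cases ε
        · exfalso; norm_num at hpos; nlinarith [Nat.cast_nonneg (α := ℝ) n]
        · rfl
      subst hn0; subst hε1
      have harg : Complex.I * (((0:ℕ):ℂ) + 1 - (1 + ((1:ℕ):ℂ))/2) = 0 := by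
        norm_num
      simp only [harg, e2_zero, mul_one]
      intro hzero
      have hval : (-1:ℂ)^ε' * e2 (-(u:ℂ)) = -1 := by linear_combination hzero
      have hsq : e2 (-(u:ℂ))^2 = 1 := by
        have h2 : ((-1:ℂ)^ε')^2 = 1 := by
          rw [← pow_mul, mul_comm, pow_mul]; norm_num
        have := congrArg (· ^ 2) hval
        simp only [mul_pow, h2, one_mul, neg_one_sq] at this
        exact this
      have hsq2 : e2 (((-2*u : ℝ)):ℂ) = 1 := by
        rw [show (((-2*u : ℝ)):ℂ) = -(u:ℂ) + -(u:ℂ) by push_cast; ring, e2_add, ← sq]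
        exact hsq
      rw [e2] at hsq2
      rw [Complex.exp_eq_one_iff] at hsq2
      obtain ⟨k, hk⟩ := hsq2
      have h2pi : (2*(π:ℂ)*Complex.I) ≠ 0 := by
        simp [Real.pi_ne_zero, Complex.I_ne_zero]
      have hcast : (((-2*u : ℝ)):ℂ) = (k:ℂ) := by
        apply mul_left_cancel₀ h2pi
        rw [hk]; ring
      have hur : -2*u = (k:ℝ) := by exact_mod_cast hcast
      have : u = ((-(k:ℚ)/2 : ℚ) : ℝ) := by push_cast; linarith
      exact (Rat.not_irrational _) (this ▸ hu)
  -- summability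
  have hFs : Summable (fun n => ‖A n * B n * C n - 1‖) := by
    have hbound : ∀ n : ℕ, ‖A n * B n * C n - 1‖ ≤ 7 * Real.exp (-(2*π*(n:ℝ))) := by
      intro n
      set R := Real.exp (-(2*π*(n:ℝ))) with hR
      have hR0 : 0 < R := Real.exp_pos _
      have ha : ‖A n - 1‖ ≤ R := by
        rw [hAn n, hR]; apply Real.exp_le_exp.2; nlinarith [Real.pi_pos]
      have hb : ‖B n - 1‖ ≤ R := by
        rw [hBn n, hR]; apply Real.exp_le_exp.2; nlinarith [Real.pi_pos]
      have hc : ‖C n - 1‖ ≤ R := by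
        rw [hCn n, hR]; apply Real.exp_le_exp.2; nlinarith [Real.pi_pos]
      have hR1 : R ≤ 1 := by
        rw [hR, Real.exp_le_one_iff]; nlinarith [Real.pi_pos, Nat.cast_nonneg (α := ℝ) n]
      have hBle : ‖B n‖ ≤ 2 := by
        calc ‖B n‖ = ‖1 + (B n - 1)‖ := by ring_nf
        _ ≤ ‖(1:ℂ)‖ + ‖B n - 1‖ := norm_add_le _ _
        _ ≤ 1 + R := by rw [norm_one]; linarith
        _ ≤ 2 := by linarith
      have hCle : ‖C n‖ ≤ 2 := by
        calc ‖C n‖ = ‖1 + (C n - 1)‖ := by ring_nf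
        _ ≤ ‖(1:ℂ)‖ + ‖C n - 1‖ := norm_add_le _ _
        _ ≤ 1 + R := by rw [norm_one]; linarith
        _ ≤ 2 := by linarith
      calc ‖A n * B n * C n - 1‖
          = ‖(A n - 1) * (B n * C n) + ((B n - 1) * C n + (C n - 1))‖ := by ring_nf
        _ ≤ ‖(A n - 1) * (B n * C n)‖ + ‖(B n - 1) * C n + (C n - 1)‖ := norm_add_le _ _
        _ ≤ ‖(A n - 1) * (B n * C n)‖ + (‖(B n - 1) * C n‖ + ‖C n - 1‖) := by
            gcongr; exact norm_add_le _ _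
        _ = ‖A n - 1‖ * (‖B n‖ * ‖C n‖) + (‖B n - 1‖ * ‖C n‖ + ‖C n - 1‖) := by
            rw [norm_mul, norm_mul, norm_mul]
        _ ≤ R * (2 * 2) + (R * 2 + R) := by
            gcongr <;> first | assumption | positivity | exact norm_nonneg _
        _ = 7 * R := by ring
    apply Summable.of_nonneg_of_le (fun n => norm_nonneg _) hbound
    exact (summable_exp_seq (fun n => (n:ℝ)) (fun n => le_refl _)).mul_left 7
  exact tprod_ne_zero_of _ (fun n => mul_ne_zero (mul_ne_zero (hA0 n) (hB0 n)) (hC0 n)) hFs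

lemma exp_le_q_pow (m : ℕ) (t : ℝ) (h : (m:ℝ) ≤ t) :
    Real.exp (-(2*π*t)) ≤ Real.exp (-(2*π)) ^ m := by
  rw [← Real.exp_nat_mul]
  apply Real.exp_le_exp.2
  nlinarith [Real.pi_pos]

lemma summable_geom_int (g : ℤ → ℝ) (q : ℝ) (hq0 : 0 ≤ q) (hq1 : q < 1)
    (h0 : ∀ n, 0 ≤ g n) (hb : ∀ n : ℤ, g n ≤ q ^ n.natAbs) : Summable g := by
  apply Summable.of_nat_of_neg
  · refine Summable.of_nonneg_of_le (fun n => h0 _) (fun n => ?_)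
      (summable_geometric_of_lt_one hq0 hq1)
    simpa using hb (n : ℤ)
  · refine Summable.of_nonneg_of_le (fun n => h0 _) (fun n => ?_)
      (summable_geometric_of_lt_one hq0 hq1)
    simpa using hb (-(n : ℤ))

lemma tsum_int_lt (g : ℤ → ℝ) (q : ℝ) (hq0 : 0 ≤ q) (hq4 : q < 1/4)
    (h0 : ∀ n, 0 ≤ g n) (hb : ∀ n : ℤ, g n ≤ q ^ (max 1 n.natAbs)) :
    Summable g ∧ ∑' n, g n < 1 := by
  have hq1 : q < 1 := by linarith
  have hb' : ∀ n : ℤ, g n ≤ q ^ n.natAbs := fun n =>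
    (hb n).trans (pow_le_pow_of_le_one hq0 hq1.le (le_max_right _ _))
  have hs := summable_geom_int g q hq0 hq1 h0 hb'
  refine ⟨hs, ?_⟩
  have hsp : Summable (fun n : ℕ => g n) := hs.comp_injective (fun a b h => by omega)
  have hsn : Summable (fun n : ℕ => g (-(n+1))) := hs.comp_injective (fun a b h => by omega)
  have hsp' : Summable (fun n : ℕ => g (n+1)) := hs.comp_injective (fun a b h => by omega)
  have hgeo : Summable (fun n : ℕ => q ^ (n+1)) := by
    apply Summable.of_nonneg_of_le (fun n => by positivity) (fun n => ?_)
      (summable_geometric_of_lt_one hq0 hq1)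
    exact pow_le_pow_of_le_one hq0 hq1.le (by omega)
  have hgeosum : ∑' n : ℕ, q ^ (n+1) = q * (1-q)⁻¹ := by
    have := tsum_geometric_of_lt_one hq0 hq1
    calc ∑' n : ℕ, q ^ (n+1) = ∑' n : ℕ, q * q ^ n := by
          congr 1; funext n; ring
      _ = q * ∑' n : ℕ, q ^ n := tsum_mul_left
      _ = q * (1-q)⁻¹ := by rw [this]
  have hbp : ∑' n : ℕ, g (n+1) ≤ q * (1-q)⁻¹ := by
    rw [← hgeosum]
    apply Summable.tsum_le_tsum _ hsp' hgeo
    intro n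
    have := hb ((n:ℤ)+1)
    have hna : ((n:ℤ)+1).natAbs = n+1 := by omega
    rw [hna] at this
    simpa [Nat.max_eq_right (by omega : 1 ≤ n+1)] using this
  have hbn : ∑' n : ℕ, g (-(n+1)) ≤ q * (1-q)⁻¹ := by
    rw [← hgeosum]
    apply Summable.tsum_le_tsum _ hsn hgeo
    intro n
    have := hb (-((n:ℤ)+1))
    have hna : (-((n:ℤ)+1)).natAbs = n+1 := by omega
    rw [hna] at this
    simpa [Nat.max_eq_right (by omega : 1 ≤ n+1)] using this
  have hg0 : g 0 ≤ q := by simpa using hb 0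
  have hsplit : ∑' n : ℤ, g n = (∑' n : ℕ, g n) + ∑' n : ℕ, g (-(n+1)) := by
    rw [tsum_of_nat_of_neg_add_one hsp hsn]
  have hzero : ∑' n : ℕ, g n = g 0 + ∑' n : ℕ, g (n+1) := by
    rw [Summable.tsum_eq_zero_add hsp]
    push_cast
    ring
  have hiq : (1-q)⁻¹ ≤ 4/3 := by
    rw [inv_le_iff_one_le_mul₀ (by linarith)]
    linarith
  have h1 : q * (1-q)⁻¹ ≤ (4/3) * q := by nlinarith
  rw [hsplit, hzero]
  nlinarith

lemma chi_I_ne (p p' r s : ℤ) (hp : 2 ≤ p) (hp' : 2 ≤ p')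
    (hr1 : 1 ≤ r) (hr2 : r ≤ p - 1) (hs1 : 1 ≤ s) (hs2 : s ≤ p' - 1) :
    chiBPZ p p' r s Complex.I ≠ 0 := by
  have hpR : (0:ℝ) < (p:ℝ) := by exact_mod_cast (by omega : (0:ℤ) < p)
  have hp'R : (0:ℝ) < (p':ℝ) := by exact_mod_cast (by omega : (0:ℤ) < p')
  set X : ℤ → ℝ := fun n => ((p:ℝ)*(p':ℝ)) * ((n:ℝ) + (((r:ℝ)*(p':ℝ) - (s:ℝ)*(p:ℝ)))/(2*(p:ℝ)*(p':ℝ)))^2 with hX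
  set Y : ℤ → ℝ := fun n => ((p:ℝ)*(p':ℝ)) * ((n:ℝ) + ((-(r:ℝ)*(p':ℝ) - (s:ℝ)*(p:ℝ)))/(2*(p:ℝ)*(p':ℝ)))^2 with hY
  set x : ℤ → ℝ := fun n => Real.exp (-(2*π*X n)) with hx
  set y : ℤ → ℝ := fun n => Real.exp (-(2*π*Y n)) with hy
  -- identify the complex terms with real exponentials
  have hterm : ∀ n : ℤ,
      (e2 (Complex.I * ((p * p' : ℂ) * ((n : ℂ) + ((r * p' - s * p : ℤ) : ℂ) / (2 * p * p')) ^ 2)) -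
       e2 (Complex.I * ((p * p' : ℂ) * ((n : ℂ) + ((-r * p' - s * p : ℤ) : ℂ) / (2 * p * p')) ^ 2)))
      = ((x n - y n : ℝ) : ℂ) := by
    intro n
    have h1 : ((p * p' : ℂ) * ((n : ℂ) + ((r * p' - s * p : ℤ) : ℂ) / (2 * p * p')) ^ 2)
        = ((X n : ℝ) : ℂ) := by
      rw [hX]; push_cast; ring
    have h2 : ((p * p' : ℂ) * ((n : ℂ) + ((-r * p' - s * p : ℤ) : ℂ) / (2 * p * p')) ^ 2)
        = ((Y n : ℝ) : ℂ) := by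
      rw [hY]; push_cast; ring
    rw [h1, h2, e2_I_mul, e2_I_mul, ← Complex.ofReal_sub]
  -- arithmetic identities
  have hXid : ∀ n : ℤ, X n = X 0 + ((n*(n*p*p' + r*p' - s*p) : ℤ) : ℝ) := by
    intro n
    rw [hX]
    push_cast
    field_simp
    ring
  have hYid : ∀ n : ℤ, Y n = X 0 + (((n*p - r)*(n*p' - s) : ℤ) : ℝ) := by
    intro n
    rw [hY, hX]
    push_cast
    field_simp
    ring
  -- integer bounds
  have hfb : ∀ n : ℤ, (n.natAbs : ℤ) ≤ n*(n*p*p' + r*p' - s*p) := by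
    intro n
    rcases lt_trichotomy n 0 with hn | hn | hn
    · have hm : (n.natAbs : ℤ) = -n := by omega
      rw [hm]
      have e0 : 1*(p*p') ≤ (-n)*(p*p') := by
        apply mul_le_mul_of_nonneg_right (by omega) (by nlinarith)
      have e1 : 1*p' ≤ (p-r)*p' := by
        apply mul_le_mul_of_nonneg_right (by omega) (by omega)
      have e4 : 1*p ≤ s*p := by
        apply mul_le_mul_of_nonneg_right (by omega) (by omega)
      have hneg : 1 ≤ -(n*p*p' + r*p' - s*p) := by nlinarith
      have h2 := le_mul_of_one_le_right (show (0:ℤ) ≤ -n by omega) hneg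
      nlinarith [h2]
    · simp [hn]
    · have hm : (n.natAbs : ℤ) = n := by omega
      rw [hm]
      have e0 : 1*(p*p') ≤ n*(p*p') := by
        apply mul_le_mul_of_nonneg_right (by omega) (by nlinarith)
      have e1 : 1*p' ≤ r*p' := by
        apply mul_le_mul_of_nonneg_right (by omega) (by omega)
      have e4 : 1*p ≤ (p'-s)*p := by
        apply mul_le_mul_of_nonneg_right (by omega) (by omega)
      have hin : 1 ≤ n*p*p' + r*p' - s*p := by nlinarith
      have h2 := le_mul_of_one_le_right (show (0:ℤ) ≤ n by omega) hin
      nlinarith [h2]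
  have heb : ∀ n : ℤ, ((max 1 n.natAbs : ℕ) : ℤ) ≤ (n*p - r)*(n*p' - s) := by
    intro n
    rcases lt_trichotomy n 0 with hn | hn | hn
    · have hm : ((max 1 n.natAbs : ℕ) : ℤ) = -n := by omega
      rw [hm]
      have e0 : (-n)*2 ≤ (-n)*p := by
        apply mul_le_mul_of_nonneg_left (by omega) (by omega)
      have e1 : (-n)*2 ≤ (-n)*p' := by
        apply mul_le_mul_of_nonneg_left (by omega) (by omega)
      have ha : -n ≤ r - n*p := by nlinarith
      have hb : 1 ≤ s - n*p' := by nlinarith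
      have h0 : (0:ℤ) ≤ r - n*p := by linarith
      have h2 := le_mul_of_one_le_right h0 hb
      nlinarith [h2]
    · subst hn
      have hm : ((max 1 (0:ℤ).natAbs : ℕ) : ℤ) = 1 := by norm_num
      rw [hm]
      have e1 : 1*s ≤ r*s := by
        apply mul_le_mul_of_nonneg_right (by omega) (by omega)
      nlinarith
    · have hm : ((max 1 n.natAbs : ℕ) : ℤ) = n := by omega
      rw [hm]
      have e1 : 1*(p-1) ≤ n*(p-1) := by
        apply mul_le_mul_of_nonneg_right (by omega) (by omega)
      have e2 : 1*(p'-1) ≤ n*(p'-1) := by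
        apply mul_le_mul_of_nonneg_right (by omega) (by omega)
      have ha : n ≤ n*p - r := by nlinarith
      have hb : 1 ≤ n*p' - s := by nlinarith
      have h0 : (0:ℤ) ≤ n*p - r := by linarith
      have h2 := le_mul_of_one_le_right h0 hb
      nlinarith [h2]
  -- q = exp(-2π)
  have hq0 : (0:ℝ) ≤ Real.exp (-(2*π)) := (Real.exp_pos _).le
  have hq4 : Real.exp (-(2*π)) < 1/4 := by
    have h1 : (4:ℝ) < Real.exp (2*π) := by
      nlinarith [Real.add_one_le_exp (2*π), Real.pi_gt_three]
    have hmul : Real.exp (-(2*π)) * Real.exp (2*π) = 1 := by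
      rw [← Real.exp_add]; norm_num
    nlinarith [Real.exp_pos (-(2*π))]
  have hq1 : Real.exp (-(2*π)) < 1 := by linarith
  -- y n = x 0 * g n
  set g : ℤ → ℝ := fun n => Real.exp (-(2*π*(((n*p - r)*(n*p' - s) : ℤ) : ℝ))) with hgdef
  have hyg : ∀ n : ℤ, y n = x 0 * g n := by
    intro n
    rw [hy, hgdef]
    simp only []
    rw [hYid n, show -(2*π*(X 0 + (((n*p - r)*(n*p' - s) : ℤ) : ℝ)))
        = -(2*π*X 0) + -(2*π*(((n*p - r)*(n*p' - s) : ℤ) : ℝ)) by ring, Real.exp_add]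
  have hgb : ∀ n : ℤ, g n ≤ Real.exp (-(2*π)) ^ (max 1 n.natAbs) := by
    intro n
    apply exp_le_q_pow
    have h2 : ((((max 1 n.natAbs : ℕ) : ℤ) : ℝ)) ≤ (((n*p - r)*(n*p' - s) : ℤ) : ℝ) := Int.cast_le.mpr (heb n)
    simpa [Nat.cast_natAbs] using h2
  obtain ⟨hgs, hglt⟩ := tsum_int_lt g _ hq0 hq4 (fun n => (Real.exp_pos _).le) hgb
  have hys : Summable y := ((hgs.mul_left (x 0)).congr (fun n => (hyg n).symm))
  have hysum : ∑' n : ℤ, y n < x 0 := by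
    calc ∑' n : ℤ, y n = ∑' n : ℤ, x 0 * g n := tsum_congr hyg
      _ = x 0 * ∑' n : ℤ, g n := tsum_mul_left
      _ < x 0 * 1 := by
          apply mul_lt_mul_of_pos_left hglt (Real.exp_pos _)
      _ = x 0 := mul_one _
  -- x summable
  have hxb : ∀ n : ℤ, x n ≤ x 0 * Real.exp (-(2*π)) ^ n.natAbs := by
    intro n
    rw [hx]
    simp only []
    rw [hXid n, show -(2*π*(X 0 + ((n*(n*p*p' + r*p' - s*p) : ℤ) : ℝ)))
        = -(2*π*X 0) + -(2*π*((n*(n*p*p' + r*p' - s*p) : ℤ) : ℝ)) by ring, Real.exp_add]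
    apply mul_le_mul_of_nonneg_left _ (Real.exp_pos _).le
    apply exp_le_q_pow
    have h2 : (((n.natAbs : ℤ) : ℝ)) ≤ ((n*(n*p*p' + r*p' - s*p) : ℤ) : ℝ) := Int.cast_le.mpr (hfb n)
    simpa [Nat.cast_natAbs] using h2
  have hxs : Summable x := by
    refine Summable.of_nonneg_of_le (fun n => (Real.exp_pos _).le) hxb ?_
    exact (summable_geom_int (fun n => Real.exp (-(2*π)) ^ n.natAbs) _ hq0 hq1
      (fun n => pow_nonneg hq0 _) (fun n => le_refl _)).mul_left (x 0)
  have hx0le : x 0 ≤ ∑' n : ℤ, x n := Summable.le_tsum hxs 0 (fun j _ => (Real.exp_pos _).le)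
  have hposR : 0 < ∑' n : ℤ, (x n - y n) := by
    rw [Summable.tsum_sub hxs hys]
    linarith
  -- conclude
  rw [chiBPZ]
  apply mul_ne_zero (inv_ne_zero eta_I_ne)
  have hrw : (∑' n : ℤ,
      (e2 (Complex.I * ((p * p' : ℂ) * ((n : ℂ) + ((r * p' - s * p : ℤ) : ℂ) / (2 * p * p')) ^ 2)) -
       e2 (Complex.I * ((p * p' : ℂ) * ((n : ℂ) + ((-r * p' - s * p : ℤ) : ℂ) / (2 * p * p')) ^ 2))))
      = ((∑' n : ℤ, (x n - y n) : ℝ) : ℂ) := by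
    rw [Complex.ofReal_tsum]
    exact tsum_congr (fun n => hterm n)
  rw [hrw]
  exact Complex.ofReal_ne_zero.mpr (ne_of_gt hposR)

def charHom (w : ℂ) : Multiplicative ℝ →* ℂ where
  toFun u := e2 (((Multiplicative.toAdd u : ℝ) : ℂ) * w)
  map_one' := by
    show e2 (((Multiplicative.toAdd (1 : Multiplicative ℝ) : ℝ) : ℂ) * w) = 1
    simp only [toAdd_one, Complex.ofReal_zero, zero_mul, e2_zero]
  map_mul' u v := by
    show e2 (((Multiplicative.toAdd (u * v) : ℝ) : ℂ) * w) = _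
    rw [← e2_add, toAdd_mul]
    congr 1
    push_cast
    ring

lemma e2_inv (z : ℂ) : e2 z * e2 (-z) = 1 := by
  rw [← e2_add]; simp [e2_zero]

lemma charHom_inj {w w' : ℂ} (h : charHom w = charHom w') : w = w' := by
  by_contra hne
  have hval : ∀ u : ℝ, e2 ((u:ℂ) * w) = e2 ((u:ℂ) * w') := by
    intro u
    have := DFunLike.congr_fun h (Multiplicative.ofAdd u)
    simpa [charHom] using this
  have h1 : ∀ u : ℝ, e2 ((u:ℂ) * (w - w')) = 1 := by
    intro u
    have hmul : e2 ((u:ℂ) * (w - w')) * e2 ((u:ℂ) * w') = e2 ((u:ℂ) * w) := by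
      rw [← e2_add]; congr 1; ring
    have := hval u
    have hne0 := e2_ne_zero ((u:ℂ) * w')
    field_simp at hmul
    rw [this] at hmul
    exact mul_right_cancel₀ hne0 (by rw [hmul, one_mul])
  have h2 := h1 1
  rw [e2, Complex.exp_eq_one_iff] at h2
  obtain ⟨k, hk⟩ := h2
  have h2pi : (2*(π:ℂ)*Complex.I) ≠ 0 := by
    simp [Real.pi_ne_zero, Complex.I_ne_zero]
  have hwk : w - w' = (k:ℂ) := by
    apply mul_left_cancel₀ h2pi
    calc 2*(π:ℂ)*Complex.I * (w - w') = 2*(π:ℂ)*Complex.I * (((1:ℝ):ℂ) * (w - w')) := by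
          push_cast; ring
      _ = (k:ℂ) * (2*(π:ℂ)*Complex.I) := hk
      _ = 2*(π:ℂ)*Complex.I * (k:ℂ) := by ring
  have hk0 : k ≠ 0 := by
    intro h0
    rw [h0] at hwk
    exact hne (by push_cast at hwk; linear_combination hwk)
  have hkR : ((k:ℝ)) ≠ 0 := Int.cast_ne_zero.mpr hk0
  have hkC : ((k:ℂ)) ≠ 0 := Int.cast_ne_zero.mpr hk0
  have h3 := h1 (1/(2*(k:ℝ)))
  have harg : ((1/(2*(k:ℝ)) : ℝ):ℂ) * (w - w') = 1/2 := by
    rw [hwk]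
    push_cast
    field_simp
  rw [harg] at h3
  rw [e2] at h3
  have : Complex.exp (2*(π:ℂ)*Complex.I * (1/2)) = Complex.exp ((π:ℂ) * Complex.I) := by
    congr 1; ring
  rw [this, Complex.exp_pi_mul_I] at h3
  norm_num at h3

lemma Tchar_eval (p p' : ℤ) (ε ε' : ℕ) (r s : ℤ) (x : ℂ) (u : ℝ) :
    Tchar p p' ε ε' r s x Complex.I (u:ℂ) 0 =
    ((-1:ℂ)^(ε*ε') * e2 (Complex.I * (((p':ℂ)/p) * (x - Complex.I*(ε:ℂ)/2)^2))) *
    e2 ((u:ℂ) * (2*Complex.I*((p':ℂ)/p)*(x - Complex.I*(ε:ℂ)/2))) *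
    (theta ε ε' (u:ℂ) Complex.I * ((dedekindEta Complex.I)^2)⁻¹ *
      chiBPZ p p' r s Complex.I) := by
  rw [Tchar, zero_mul, e2_zero, div_eq_mul_inv]
  ring

/-- The typical character functions, for x ∈ ℝ + i(ℝ∖S_{r,s}), form a linearly
independent family of functions on ℍ × ℂ × ℂ. -/
theorem typical_characters_linearIndependent (p p' : ℤ) (hp : 2 ≤ p) (hp' : 2 ≤ p')
    (hco : IsCoprime p p') (r s : ℤ) (hK : (r, s) ∈ Kset p p')
    (ε ε' : ℕ) (hε : ε ≤ 1) (hε' : ε' ≤ 1) :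
    LinearIndependent ℂ (fun x : {x : ℂ // x.im ∉ SrsSet p p' r s} =>
      (fun z : UpperHalfPlane × ℂ × ℂ =>
        Tchar p p' ε ε' r s x.1 (z.1 : ℂ) z.2.1 z.2.2)) := by
  -- extract Kset bounds
  rw [Kset, Finset.mem_filter, Finset.mem_product, Finset.mem_Icc, Finset.mem_Icc] at hK
  obtain ⟨⟨⟨hr1, hr2⟩, hs1, hs2⟩, _⟩ := hK
  have hpC : ((p:ℂ)) ≠ 0 := Int.cast_ne_zero.mpr (by omega)
  have hp'C : ((p':ℂ)) ≠ 0 := Int.cast_ne_zero.mpr (by omega)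
  set a : ℂ := (p':ℂ)/p with hadef
  have ha : a ≠ 0 := div_ne_zero hp'C hpC
  set c : ℂ := Complex.I*(ε:ℂ)/2 with hcdef
  set wmap : ℂ → ℂ := fun x => 2*Complex.I*a*(x - c) with hwdef
  set Kc : ℂ → ℂ := fun x => (-1:ℂ)^(ε*ε') * e2 (Complex.I * (a * (x - c)^2)) with hKcdef
  have hK0 : ∀ x : ℂ, Kc x ≠ 0 := fun x =>
    mul_ne_zero (pow_ne_zero _ (by norm_num)) (e2_ne_zero _)
  set W : ℝ → ℂ := fun u => theta ε ε' (u:ℂ) Complex.I * ((dedekindEta Complex.I)^2)⁻¹ *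
      chiBPZ p p' r s Complex.I with hWdef
  have hW : ∀ u : ℝ, Irrational u → W u ≠ 0 := fun u hu =>
    mul_ne_zero (mul_ne_zero (theta_I_ne ε ε' hε hε' u hu)
      (inv_ne_zero (pow_ne_zero 2 eta_I_ne))) (chi_I_ne p p' r s hp hp' hr1 hr2 hs1 hs2)
  rw [linearIndependent_iff']
  intro t cgo hrel i hi
  set H : ℝ → ℂ := fun u => ∑ j ∈ t, cgo j * Kc j.1 * e2 ((u:ℂ) * wmap j.1) with hHdef
  have hH0 : ∀ u : ℝ, Irrational u → H u = 0 := by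
    intro u hu
    have hrel' := congrFun hrel (UpperHalfPlane.I, ((u:ℂ), (0:ℂ)))
    simp only [Finset.sum_apply, Pi.smul_apply, smul_eq_mul, Pi.zero_apply] at hrel'
    have hcoe : ((UpperHalfPlane.I : UpperHalfPlane) : ℂ) = Complex.I := rfl
    have heval : ∑ j ∈ t, cgo j * (Kc j.1 * e2 ((u:ℂ) * wmap j.1) * W u) = 0 := by
      rw [← hrel']
      apply Finset.sum_congr rfl
      intro j _
      rw [hcoe, Tchar_eval p p' ε ε' r s j.1 u]
    have hfac : H u * W u = 0 := by
      rw [hHdef]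
      simp only []
      rw [Finset.sum_mul]
      rw [← heval]
      apply Finset.sum_congr rfl
      intro j _
      ring
    exact (mul_eq_zero.mp hfac).resolve_right (hW u hu)
  have hHcont : Continuous H := by
    apply continuous_finset_sum
    intro j _
    apply Continuous.mul continuous_const
    show Continuous fun u : ℝ => e2 ((u:ℂ) * wmap j.1)
    unfold e2
    exact Complex.continuous_exp.comp
      (continuous_const.mul (Complex.continuous_ofReal.mul continuous_const))
  have hHzero : H = 0 :=
    Continuous.ext_on dense_irrational hHcont continuous_const (fun u hu => hH0 u hu)
  have hinj : Function.Injective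
      (fun j : {x : ℂ // x.im ∉ SrsSet p p' r s} => charHom (wmap j.1)) := by
    intro j j' h
    have hw := charHom_inj h
    apply Subtype.ext
    rw [hwdef] at hw
    simp only [] at hw
    have h2 : (2*Complex.I*a) ≠ 0 := by
      apply mul_ne_zero (mul_ne_zero (by norm_num) Complex.I_ne_zero) ha
    have := mul_left_cancel₀ h2 hw
    exact sub_left_injective this
  have li := (linearIndependent_monoidHom (Multiplicative ℝ) ℂ).comp
    (fun j : {x : ℂ // x.im ∉ SrsSet p p' r s} => charHom (wmap j.1)) hinj
  have hrel2 : ∑ j ∈ t, (cgo j * Kc j.1) •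
      (((fun f : Multiplicative ℝ →* ℂ => (f : Multiplicative ℝ → ℂ)) ∘
        (fun j : {x : ℂ // x.im ∉ SrsSet p p' r s} => charHom (wmap j.1))) j) = 0 := by
    funext m
    simp only [Finset.sum_apply, Pi.smul_apply, smul_eq_mul, Pi.zero_apply,
      Function.comp_apply]
    have := congrFun hHzero (Multiplicative.toAdd m)
    rw [hHdef] at this
    simp only [Pi.zero_apply] at this
    rw [← this]
    apply Finset.sum_congr rfl
    intro j _
    rw [charHom]
    simp only [MonoidHom.coe_mk, OneHom.coe_mk]
  have hz := linearIndependent_iff'.mp li t (fun j => cgo j * Kc j.1) hrel2 i hi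
  rcases mul_eq_zero.mp hz with h | h
  · exact h
  · exact absurd h (hK0 i.1)

end
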